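/- In the Koszul complex (R₅, d) of the pentagon, each of the five elements t₁ = u₁u₂u₃ ⊗ v₄v₅, t₂ = u₂u₃u₄ ⊗ v₅v₁, t₃ = u₃u₄u₅ ⊗ v₁v₂, t₄ = u₁u₄u₅ ⊗ v₂v₃, t₅ = u₁u₂u₅ ⊗ v₃v₄ is a cocycle (d tᵢ = 0), and all five represent the same cohomology class: tᵢ − t₁ lies in the image of d for every i. In particular d(u₁u₂u₃u₄ ⊗ v₅) = u₂u₃u₄ ⊗ v₁v₅ − u₁u₂u₃ ⊗ v₄v₅. -/

import Mathlib

set_option synthInstance.maxHeartbeats 1000000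
set_option maxHeartbeats 2000000


open scoped TensorProduct

/-- The exterior algebra `Λ[u₁,…,u₅]` over `ℤ`. -/
abbrev Ext5 := ExteriorAlgebra ℤ (Fin 5 → ℤ)

/-- The face ring `ℤ[K₅]` of the pentagon boundary complex: `ℤ[v₁,…,v₅]` modulo the
monomials `vᵢvⱼ` for the non-edges `{1,3},{1,4},{2,4},{2,5},{3,5}`, i.e. `vᵢv_{i+2}`
for all `i` (indices cyclic in `Fin 5`). -/
abbrev FaceRing5 := MvPolynomial (Fin 5) ℤ ⧸
  Ideal.span (Set.range fun i : Fin 5 =>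
    (MvPolynomial.X i * MvPolynomial.X (i + 2) : MvPolynomial (Fin 5) ℤ))

/-- The Koszul algebra `R₅ = Λ[u₁,…,u₅] ⊗_ℤ ℤ[K₅]`, with the `uᵢ` anticommuting with
each other and commuting with the `vⱼ`. -/
abbrev R5 := Ext5 ⊗[ℤ] FaceRing5

/-- The exterior generators `u₁,…,u₅` (indexed by `Fin 5`). -/
noncomputable def ug (i : Fin 5) : Ext5 := ExteriorAlgebra.ι ℤ (Pi.single i 1)

/-- The polynomial generators `v₁,…,v₅` of the face ring (indexed by `Fin 5`). -/
noncomputable def vg (i : Fin 5) : FaceRing5 :=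
  Ideal.Quotient.mk _ (MvPolynomial.X i)

/-- The submodule of exterior-degree-`p` elements of `Λ[u₁,…,u₅]`. -/
noncomputable def extDeg (p : ℕ) : Submodule ℤ Ext5 :=
  (LinearMap.range (ExteriorAlgebra.ι ℤ : (Fin 5 → ℤ) →ₗ[ℤ] Ext5)) ^ p

/-- `d` is the Koszul differential: a `ℤ`-linear map with `d(uᵢ ⊗ 1) = 1 ⊗ vᵢ`,
`d(1 ⊗ vᵢ) = 0`, satisfying the graded Leibniz rule
`d(ab) = (da)b + (−1)^p a(db)` for `a = x ⊗ m` with `x` of exterior degree `p`.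
(These properties determine `d` uniquely.) -/
def IsKoszulD (d : R5 →ₗ[ℤ] R5) : Prop :=
  (∀ i : Fin 5, d (ug i ⊗ₜ[ℤ] 1) = 1 ⊗ₜ[ℤ] vg i) ∧
  (∀ i : Fin 5, d (1 ⊗ₜ[ℤ] vg i) = 0) ∧
  (∀ (p : ℕ) (x : Ext5), x ∈ extDeg p → ∀ (m : FaceRing5) (b : R5),
    d ((x ⊗ₜ[ℤ] m) * b) = d (x ⊗ₜ[ℤ] m) * b + ((-1 : ℤ) ^ p) • ((x ⊗ₜ[ℤ] m) * d b))

/-- In the Koszul complex `(R₅, d)` of the pentagon, the five elements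
`t₁ = u₁u₂u₃ ⊗ v₄v₅`, `t₂ = u₂u₃u₄ ⊗ v₅v₁`, `t₃ = u₃u₄u₅ ⊗ v₁v₂`,
`t₄ = u₁u₄u₅ ⊗ v₂v₃`, `t₅ = u₁u₂u₅ ⊗ v₃v₄` are cocycles representing a common
cohomology class, and `d(u₁u₂u₃u₄ ⊗ v₅) = u₂u₃u₄ ⊗ v₁v₅ − u₁u₂u₃ ⊗ v₄v₅`. -/
lemma ug_mem1 (i : Fin 5) : ug i ∈ extDeg 1 := by
  rw [extDeg, pow_one]; exact ⟨Pi.single i 1, rfl⟩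
lemma one_mem0 : (1 : Ext5) ∈ extDeg 0 := by
  rw [extDeg, pow_zero]; exact Submodule.one_le.mp le_rfl

variable {d : R5 →ₗ[ℤ] R5}

lemma d_u_mul (hd : IsKoszulD d) (i : Fin 5) (b : R5) :
    d ((ug i ⊗ₜ[ℤ] (1:FaceRing5)) * b) = (1 ⊗ₜ[ℤ] vg i) * b - (ug i ⊗ₜ[ℤ] 1) * d b := by
  have := hd.2.2 1 (ug i) (ug_mem1 i) 1 b
  rw [hd.1 i] at this
  simpa [sub_eq_add_neg] using this

lemma d_one_vv (hd : IsKoszulD d) (i j : Fin 5) :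
    d ((1:Ext5) ⊗ₜ[ℤ] (vg i * vg j)) = 0 := by
  have h : ((1:Ext5) ⊗ₜ[ℤ] (vg i * vg j)) = ((1:Ext5) ⊗ₜ[ℤ] vg i) * ((1:Ext5) ⊗ₜ[ℤ] vg j) := by
    simp [Algebra.TensorProduct.tmul_mul_tmul]
  rw [h]
  have h2 := hd.2.2 0 1 one_mem0 (vg i) (1 ⊗ₜ[ℤ] vg j)
  rw [h2, hd.2.1 i, hd.2.1 j]
  simp [zero_mul (M₀ := R5), mul_zero (M₀ := R5)]

lemma d_uuu_m (hd : IsKoszulD d) (a b c : Fin 5) (m : FaceRing5) (hm : d ((1:Ext5) ⊗ₜ[ℤ] m) = 0) :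
    d ((ug a * ug b * ug c) ⊗ₜ[ℤ] m) =
      (ug b * ug c) ⊗ₜ[ℤ] (vg a * m) - (ug a * ug c) ⊗ₜ[ℤ] (vg b * m)
        + (ug a * ug b) ⊗ₜ[ℤ] (vg c * m) := by
  have e : (ug a * ug b * ug c) ⊗ₜ[ℤ] m
      = (ug a ⊗ₜ[ℤ] (1:FaceRing5)) * ((ug b ⊗ₜ[ℤ] (1:FaceRing5)) * ((ug c ⊗ₜ[ℤ] (1:FaceRing5)) * ((1:Ext5) ⊗ₜ[ℤ] m))) := by
    simp [Algebra.TensorProduct.tmul_mul_tmul, mul_assoc]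
  rw [e, d_u_mul hd, d_u_mul hd, d_u_mul hd, hm]
  simp only [mul_zero (M₀ := R5), sub_zero, mul_sub (α := R5), Algebra.TensorProduct.tmul_mul_tmul, one_mul, mul_one]
  abel

lemma vg_zero (i : Fin 5) : vg i * vg (i+2) = 0 := by
  show Ideal.Quotient.mk _ _ * Ideal.Quotient.mk _ _ = 0
  rw [← map_mul, Ideal.Quotient.eq_zero_iff_mem]
  exact Ideal.subset_span ⟨i, rfl⟩

lemma z02 : vg 0 * vg 2 = 0 := vg_zero 0
lemma z13 : vg 1 * vg 3 = 0 := vg_zero 1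
lemma z24 : vg 2 * vg 4 = 0 := vg_zero 2
lemma z30 : vg 3 * vg 0 = 0 := vg_zero 3
lemma z41 : vg 4 * vg 1 = 0 := vg_zero 4
lemma z20 : vg 2 * vg 0 = 0 := by rw [mul_comm]; exact z02
lemma z31 : vg 3 * vg 1 = 0 := by rw [mul_comm]; exact z13
lemma z42 : vg 4 * vg 2 = 0 := by rw [mul_comm]; exact z24
lemma z03 : vg 0 * vg 3 = 0 := by rw [mul_comm]; exact z30
lemma z14 : vg 1 * vg 4 = 0 := by rw [mul_comm]; exact z41

lemma d_uuuu_m (hd : IsKoszulD d) (a b c e : Fin 5) (m : FaceRing5)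
    (hm : d ((1:Ext5) ⊗ₜ[ℤ] m) = 0) :
    d ((ug a * ug b * ug c * ug e) ⊗ₜ[ℤ] m) =
      (ug b * ug c * ug e) ⊗ₜ[ℤ] (vg a * m) - (ug a * ug c * ug e) ⊗ₜ[ℤ] (vg b * m)
        + (ug a * ug b * ug e) ⊗ₜ[ℤ] (vg c * m) - (ug a * ug b * ug c) ⊗ₜ[ℤ] (vg e * m) := by
  have e1 : (ug a * ug b * ug c * ug e) ⊗ₜ[ℤ] m
      = (ug a ⊗ₜ[ℤ] (1:FaceRing5)) * ((ug b ⊗ₜ[ℤ] (1:FaceRing5)) *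
          ((ug c ⊗ₜ[ℤ] (1:FaceRing5)) * ((ug e ⊗ₜ[ℤ] (1:FaceRing5)) * ((1:Ext5) ⊗ₜ[ℤ] m)))) := by
    simp [Algebra.TensorProduct.tmul_mul_tmul, mul_assoc]
  rw [e1, d_u_mul hd, d_u_mul hd, d_u_mul hd, d_u_mul hd, hm]
  simp only [mul_zero (M₀ := R5), sub_zero, mul_sub (α := R5), Algebra.TensorProduct.tmul_mul_tmul, one_mul, mul_one,
    mul_assoc]
  abel

theorem pentagon_top_class_cocycles (d : R5 →ₗ[ℤ] R5) (hd : IsKoszulD d) :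
    let t₁ : R5 := (ug 0 * ug 1 * ug 2) ⊗ₜ[ℤ] (vg 3 * vg 4)
    let t₂ : R5 := (ug 1 * ug 2 * ug 3) ⊗ₜ[ℤ] (vg 4 * vg 0)
    let t₃ : R5 := (ug 2 * ug 3 * ug 4) ⊗ₜ[ℤ] (vg 0 * vg 1)
    let t₄ : R5 := (ug 0 * ug 3 * ug 4) ⊗ₜ[ℤ] (vg 1 * vg 2)
    let t₅ : R5 := (ug 0 * ug 1 * ug 4) ⊗ₜ[ℤ] (vg 2 * vg 3)
    ((d t₁ = 0 ∧ d t₂ = 0 ∧ d t₃ = 0 ∧ d t₄ = 0 ∧ d t₅ = 0) ∧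
     (t₁ - t₁ ∈ LinearMap.range d ∧ t₂ - t₁ ∈ LinearMap.range d ∧
      t₃ - t₁ ∈ LinearMap.range d ∧ t₄ - t₁ ∈ LinearMap.range d ∧
      t₅ - t₁ ∈ LinearMap.range d) ∧
     d ((ug 0 * ug 1 * ug 2 * ug 3) ⊗ₜ[ℤ] vg 4) =
       (ug 1 * ug 2 * ug 3) ⊗ₜ[ℤ] (vg 0 * vg 4) - (ug 0 * ug 1 * ug 2) ⊗ₜ[ℤ] (vg 3 * vg 4)) := by
  intro t₁ t₂ t₃ t₄ t₅
  -- triple-product zeros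
  have A034 : vg 0 * (vg 3 * vg 4) = 0 := by linear_combination vg 4 * z03
  have A134 : vg 1 * (vg 3 * vg 4) = 0 := by linear_combination vg 4 * z13
  have A234 : vg 2 * (vg 3 * vg 4) = 0 := by linear_combination vg 3 * z24
  have A140 : vg 1 * (vg 4 * vg 0) = 0 := by linear_combination vg 0 * z14
  have A240 : vg 2 * (vg 4 * vg 0) = 0 := by linear_combination vg 0 * z24
  have A340 : vg 3 * (vg 4 * vg 0) = 0 := by linear_combination vg 4 * z30
  have A201 : vg 2 * (vg 0 * vg 1) = 0 := by linear_combination vg 1 * z20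
  have A301 : vg 3 * (vg 0 * vg 1) = 0 := by linear_combination vg 1 * z30
  have A401 : vg 4 * (vg 0 * vg 1) = 0 := by linear_combination vg 0 * z41
  have A012 : vg 0 * (vg 1 * vg 2) = 0 := by linear_combination vg 1 * z02
  have A312 : vg 3 * (vg 1 * vg 2) = 0 := by linear_combination vg 2 * z31
  have A412 : vg 4 * (vg 1 * vg 2) = 0 := by linear_combination vg 2 * z41
  have A023 : vg 0 * (vg 2 * vg 3) = 0 := by linear_combination vg 3 * z02
  have A123 : vg 1 * (vg 2 * vg 3) = 0 := by linear_combination vg 2 * z13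
  have A423 : vg 4 * (vg 2 * vg 3) = 0 := by linear_combination vg 3 * z42
  -- pair zeros used with single v multiplier
  have B14 : vg 1 * vg 4 = 0 := z14
  have hdt3 : d ((ug 0 * ug 1 * ug 2 * ug 3) ⊗ₜ[ℤ] vg 4) =
      (ug 1 * ug 2 * ug 3) ⊗ₜ[ℤ] (vg 0 * vg 4) - (ug 0 * ug 1 * ug 2) ⊗ₜ[ℤ] (vg 3 * vg 4) := by
    rw [d_uuuu_m hd 0 1 2 3 (vg 4) (hd.2.1 4)]
    rw [z14, z24]
    simp
  have h21 : t₂ - t₁ ∈ LinearMap.range d := by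
    refine ⟨(ug 0 * ug 1 * ug 2 * ug 3) ⊗ₜ[ℤ] vg 4, ?_⟩
    rw [hdt3]; show _ = t₂ - t₁
    rw [mul_comm (vg 0) (vg 4)]
  have h32 : t₃ - t₂ ∈ LinearMap.range d := by
    refine ⟨(ug 1 * ug 2 * ug 3 * ug 4) ⊗ₜ[ℤ] vg 0, ?_⟩
    rw [d_uuuu_m hd 1 2 3 4 (vg 0) (hd.2.1 0)]
    rw [z20, z30]
    show _ = t₃ - t₂
    rw [mul_comm (vg 1) (vg 0)]
    simp
    rfl
  have h43 : t₄ - t₃ ∈ LinearMap.range d := by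
    refine ⟨-((ug 0 * ug 2 * ug 3 * ug 4) ⊗ₜ[ℤ] vg 1), ?_⟩
    rw [map_neg, d_uuuu_m hd 0 2 3 4 (vg 1) (hd.2.1 1)]
    rw [z31, z41]
    show _ = t₄ - t₃
    rw [mul_comm (vg 2) (vg 1)]
    simp
    rfl
  have h54 : t₅ - t₄ ∈ LinearMap.range d := by
    refine ⟨(ug 0 * ug 1 * ug 3 * ug 4) ⊗ₜ[ℤ] vg 2, ?_⟩
    rw [d_uuuu_m hd 0 1 3 4 (vg 2) (hd.2.1 2)]
    rw [z02, z42]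
    show _ = t₅ - t₄
    rw [mul_comm (vg 3) (vg 2)]
    simp only [TensorProduct.tmul_zero, sub_zero, zero_sub, add_zero, zero_add]
    exact neg_add_eq_sub _ _
  refine ⟨⟨?_, ?_, ?_, ?_, ?_⟩, ⟨?_, ?_, ?_, ?_, ?_⟩, hdt3⟩
  · rw [show t₁ = (ug 0 * ug 1 * ug 2) ⊗ₜ[ℤ] (vg 3 * vg 4) from rfl,
      d_uuu_m hd 0 1 2 _ (d_one_vv hd 3 4), A034, A134, A234]
    simp
  · rw [show t₂ = (ug 1 * ug 2 * ug 3) ⊗ₜ[ℤ] (vg 4 * vg 0) from rfl,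
      d_uuu_m hd 1 2 3 _ (d_one_vv hd 4 0), A140, A240, A340]
    simp
  · rw [show t₃ = (ug 2 * ug 3 * ug 4) ⊗ₜ[ℤ] (vg 0 * vg 1) from rfl,
      d_uuu_m hd 2 3 4 _ (d_one_vv hd 0 1), A201, A301, A401]
    simp
  · rw [show t₄ = (ug 0 * ug 3 * ug 4) ⊗ₜ[ℤ] (vg 1 * vg 2) from rfl,
      d_uuu_m hd 0 3 4 _ (d_one_vv hd 1 2), A012, A312, A412]
    simp
  · rw [show t₅ = (ug 0 * ug 1 * ug 4) ⊗ₜ[ℤ] (vg 2 * vg 3) from rfl,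
      d_uuu_m hd 0 1 4 _ (d_one_vv hd 2 3), A023, A123, A423]
    simp
  · simp
  · exact h21
  · exact sub_add_sub_cancel t₃ t₂ t₁ ▸ add_mem h32 h21
  · have := add_mem h43 (add_mem h32 h21)
    rw [sub_add_sub_cancel, sub_add_sub_cancel] at this; exact this
  · have := add_mem h54 (add_mem h43 (add_mem h32 h21))
    rw [sub_add_sub_cancel, sub_add_sub_cancel, sub_add_sub_cancel] at this; exact this
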